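/- Let X be a finite set with |X| = 3n and let F = {F_1, …, F_m} with m ≥ n be a family of 3-element subsets of X. Construct the weighted graph G(X, F) as follows: for each a ∈ X an element vertex v(a) of weight 1; for each F_j a set vertex v(F_j) of weight 1; for each F_j and each a ∈ F_j an edge (v(F_j), v(a)) of weight m − n + 1; a start vertex v_s of weight 0 with an edge (v_s, v(F_j)) of weight 0 for every j; and a dummy vertex d of weight 1 with an edge (v_s, d) of weight 0. Then there exists a covering walk from v_s in G(X, F) with agent count exactly N = 3n + m + 1 if and only if F contains an exact 3-cover of X, i.e., a subfamily F_c ⊆ F with |F_c| = n whose members are pairwise disjoint and whose union is X. -/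

import Mathlib

/-! Strategic deployment: common definitions.

A walk is scanned with a state consisting of the set of already-visited
vertices, the number `curr` of currently available (non-settled) agents, and
the number `add` of additional agents (beyond `N = ∑ v, wV v`) recruited so
far.  Crossing an edge `e` requires `curr ≥ wE e` (topping up `add`
otherwise); the first visit of a vertex `v` settles `wV v` agents there. -/

namespace Deploy

structure St (V : Type*) (α : Type*) where
  visited : Finset V
  curr : α
  add : α

variable {V : Type*} [DecidableEq V] {α : Type*} [AddCommMonoid α] [LinearOrder α] [IsOrderedAddMonoid α] [Sub α]

/-- Scan step for crossing an edge `e`. -/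
def crossEdge (wE : Sym2 V → α) (e : Sym2 V) (s : St V α) : St V α :=
  if s.curr < wE e then ⟨s.visited, wE e, s.add + (wE e - s.curr)⟩ else s

/-- Scan step for visiting a vertex `v` (only first visits have an effect). -/
def visitVtx (wV : V → α) (v : V) (s : St V α) : St V α :=
  if v ∈ s.visited then s
  else if s.curr < wV v then ⟨insert v s.visited, 0, s.add + (wV v - s.curr)⟩
  else ⟨insert v s.visited, s.curr - wV v, s.add⟩

variable {G : SimpleGraph V}

/-- Scanning a walk: alternately cross the next edge and visit the next vertex. -/
def scanWalk (wE : Sym2 V → α) (wV : V → α) : {u t : V} → G.Walk u t → St V α → St V α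
  | _, _, .nil, s => s
  | u, _, .cons (v := v) _ p, s => scanWalk wE wV p (visitVtx wV v (crossEdge wE s(u, v) s))

/-- The agent count of a walk `p` starting at `vs`: the scan starts with
`curr = N = ∑ v, wV v` and `add = 0`, first visiting the start vertex; the
agent count is `N` plus the final value of `add`. -/
def agentCount [Fintype V] (wE : Sym2 V → α) (wV : V → α) {vs t : V} (p : G.Walk vs t) : α :=
  (∑ v, wV v) + (scanWalk wE wV p (visitVtx wV vs ⟨∅, ∑ v, wV v, 0⟩)).add

/-- A walk is covering if every vertex of the graph appears on it. -/
def IsCovering {vs t : V} (p : G.Walk vs t) : Prop := ∀ v : V, v ∈ p.support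

end Deploy

namespace Deploy

/-- Vertices of the graph `G(X, F)` from the 3-Exact-Cover reduction
(no-return variant): an element vertex for each element of `X`, a set vertex
for each of the `m` three-element subsets, a start vertex `v_s`, and a dummy
vertex `d`. -/
inductive XCVtx (A : Type*) (m : ℕ) where
  | elem : A → XCVtx A m
  | setv : Fin m → XCVtx A m
  | start : XCVtx A m
  | dummy : XCVtx A m
deriving DecidableEq

instance (A : Type*) [Fintype A] (m : ℕ) : Fintype (XCVtx A m) := by
  classical
  have e : XCVtx A m ≃ (A ⊕ Fin m) ⊕ (Fin 2) :=
    { toFun := fun v => match v with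
        | .elem a => Sum.inl (Sum.inl a)
        | .setv j => Sum.inl (Sum.inr j)
        | .start => Sum.inr 0
        | .dummy => Sum.inr 1
      invFun := fun v => match v with
        | Sum.inl (Sum.inl a) => .elem a
        | Sum.inl (Sum.inr j) => .setv j
        | Sum.inr ⟨0, _⟩ => .start
        | Sum.inr ⟨1, _⟩ => .dummy
      left_inv := by rintro (a | j | _ | _) <;> rfl
      right_inv := by rintro ((a | j) | ⟨(_ | (_ | k)), hk⟩) <;> first | rfl | omega }
  exact Fintype.ofEquiv _ e.symm

/-- The graph `G(X, F)`: the start vertex is joined to every set vertex and to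
the dummy vertex, and each set vertex `v(F_j)` is joined to the element
vertices of the three elements of `F_j`. -/
def xcGraph {A : Type*} {m : ℕ} (F : Fin m → Finset A) : SimpleGraph (XCVtx A m) :=
  SimpleGraph.fromRel (fun u v =>
    match u, v with
    | .start, .setv _ => True
    | .start, .dummy => True
    | .setv j, .elem a => a ∈ F j
    | _, _ => False)

/-- Edge weights of `G(X, F)`: edges between set vertices and element vertices
have weight `m - n + 1`; all edges incident to the start vertex have weight
`0`. -/
def xcWE (A : Type*) (n m : ℕ) : Sym2 (XCVtx A m) → ℕ :=
  Sym2.lift ⟨fun u v =>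
    match u, v with
    | .setv _, .elem _ => m - n + 1
    | .elem _, .setv _ => m - n + 1
    | _, _ => 0,
    by rintro (a | j | _ | _) (b | k | _ | _) <;> rfl⟩

/-- Vertex weights of `G(X, F)`: the start vertex has weight `0`, every other
vertex has weight `1`. -/
def xcWV (A : Type*) (m : ℕ) : XCVtx A m → ℕ
  | .start => 0
  | _ => 1

end Deploy
set_option linter.unusedSectionVars false

namespace Deploy

section Generic

variable {V : Type*} [DecidableEq V] {G : SimpleGraph V}
variable (wE : Sym2 V → ℕ) (wV : V → ℕ)

lemma add_le_crossEdge (e : Sym2 V) (s : St V ℕ) : s.add ≤ (crossEdge wE e s).add := by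
  unfold crossEdge; split <;> simp

lemma add_le_visitVtx (v : V) (s : St V ℕ) : s.add ≤ (visitVtx wV v s).add := by
  unfold visitVtx; split
  · rfl
  · split <;> simp

lemma add_le_scanWalk : ∀ {u t : V} (p : G.Walk u t) (s : St V ℕ),
    s.add ≤ (scanWalk wE wV p s).add
  | _, _, .nil, s => le_refl _
  | u, _, .cons (v := v) _ p, s => by
      calc s.add ≤ (crossEdge wE s(u, v) s).add := add_le_crossEdge wE _ s
        _ ≤ (visitVtx wV v (crossEdge wE s(u, v) s)).add := add_le_visitVtx wV _ _
        _ ≤ _ := add_le_scanWalk p _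

lemma visited_crossEdge (e : Sym2 V) (s : St V ℕ) :
    (crossEdge wE e s).visited = s.visited := by
  unfold crossEdge; split <;> rfl

lemma visited_subset_visitVtx (v : V) (s : St V ℕ) :
    s.visited ⊆ (visitVtx wV v s).visited := by
  unfold visitVtx; split
  · rfl
  · split <;> exact Finset.subset_insert _ _

lemma mem_visited_visitVtx (v : V) (s : St V ℕ) : v ∈ (visitVtx wV v s).visited := by
  unfold visitVtx; split
  · assumption
  · split <;> exact Finset.mem_insert_self _ _

lemma visited_subset_scanWalk : ∀ {u t : V} (p : G.Walk u t) (s : St V ℕ),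
    s.visited ⊆ (scanWalk wE wV p s).visited
  | _, _, .nil, s => Finset.Subset.refl _
  | u, _, .cons (v := v) _ p, s => by
      refine subset_trans ?_ (visited_subset_scanWalk p _)
      rw [← visited_crossEdge wE s(u,v) s]
      exact visited_subset_visitVtx wV _ _

lemma support_subset_scanWalk : ∀ {u t : V} (p : G.Walk u t) (s : St V ℕ),
    u ∈ s.visited → ∀ v ∈ p.support, v ∈ (scanWalk wE wV p s).visited
  | _, _, .nil, s, hu, v, hv => by
      rw [SimpleGraph.Walk.support_nil] at hv
      simp at hv; subst hv; exact hu
  | u, _, .cons (v := w) _ p, s, hu, v, hv => by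
      rw [SimpleGraph.Walk.support_cons] at hv
      rcases List.mem_cons.1 hv with h | h
      · subst h
        exact visited_subset_scanWalk wE wV p _
          (visited_subset_visitVtx wV _ _ (by rw [visited_crossEdge]; exact hu))
      · exact support_subset_scanWalk p _ (mem_visited_visitVtx wV w _) v h

lemma crossEdge_of_add (e : Sym2 V) (s : St V ℕ) (h0 : s.add = 0)
    (h : (crossEdge wE e s).add = 0) : wE e ≤ s.curr ∧ crossEdge wE e s = s := by
  unfold crossEdge at h ⊢
  by_cases hc : s.curr < wE e
  · rw [if_pos hc] at h; simp [h0] at h; omega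
  · exact ⟨not_lt.1 hc, if_neg hc⟩

lemma visitVtx_of_add (v : V) (s : St V ℕ) (h0 : s.add = 0)
    (h : (visitVtx wV v s).add = 0) :
    (v ∈ s.visited ∧ visitVtx wV v s = s) ∨
    (v ∉ s.visited ∧ wV v ≤ s.curr ∧
      visitVtx wV v s = ⟨insert v s.visited, s.curr - wV v, s.add⟩) := by
  unfold visitVtx at h ⊢
  by_cases hm : v ∈ s.visited
  · exact Or.inl ⟨hm, if_pos hm⟩
  · right
    rw [if_neg hm] at h ⊢
    by_cases hc : s.curr < wV v
    · rw [if_pos hc] at h; simp [h0] at h; omega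
    · exact ⟨hm, not_lt.1 hc, if_neg hc⟩

lemma scanWalk_append : ∀ {u t r : V} (p : G.Walk u t) (q : G.Walk t r) (s : St V ℕ),
    scanWalk wE wV (p.append q) s = scanWalk wE wV q (scanWalk wE wV p s)
  | _, _, _, .nil, q, s => rfl
  | u, _, _, .cons (v := v) h p, q, s => by
      rw [SimpleGraph.Walk.cons_append]
      exact scanWalk_append p q _

end Generic

end Deploy
namespace Deploy

section Spec

variable {A : Type*} [Fintype A] [DecidableEq A] {n m : ℕ} {F : Fin m → Finset A}

lemma adj_start_setv (j : Fin m) : (xcGraph F).Adj .start (.setv j) := by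
  rw [xcGraph, SimpleGraph.fromRel_adj]
  exact ⟨by simp, Or.inl trivial⟩

lemma adj_start_dummy : (xcGraph F).Adj (XCVtx.start : XCVtx A m) .dummy := by
  rw [xcGraph, SimpleGraph.fromRel_adj]
  exact ⟨by simp, Or.inl trivial⟩

lemma adj_setv_elem {j : Fin m} {a : A} (h : a ∈ F j) :
    (xcGraph F).Adj (.setv j) (.elem a) := by
  rw [xcGraph, SimpleGraph.fromRel_adj]
  exact ⟨by simp, Or.inl h⟩

lemma adj_elem {a : A} {v : XCVtx A m} (h : (xcGraph F).Adj (.elem a) v) :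
    ∃ j, v = .setv j ∧ a ∈ F j := by
  rw [xcGraph, SimpleGraph.fromRel_adj] at h
  obtain ⟨-, h | h⟩ := h
  · match v with
    | .setv j => exact h.elim
    | .elem b => exact h.elim
    | .start => exact h.elim
    | .dummy => exact h.elim
  · match v with
    | .setv j => exact ⟨j, rfl, h⟩
    | .elem b => exact h.elim
    | .start => exact h.elim
    | .dummy => exact h.elim

lemma adj_elem' {a : A} {v : XCVtx A m} (h : (xcGraph F).Adj v (.elem a)) :
    ∃ j, v = .setv j ∧ a ∈ F j := adj_elem h.symm

lemma xcWE_start_setv (j : Fin m) : xcWE A n m s(.start, .setv j) = 0 := rfl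
lemma xcWE_start_dummy : xcWE A n m s((.start : XCVtx A m), .dummy) = 0 := rfl
lemma xcWE_setv_start (j : Fin m) : xcWE A n m s(.setv j, .start) = 0 := rfl
lemma xcWE_setv_elem (j : Fin m) (a : A) : xcWE A n m s(.setv j, .elem a) = m - n + 1 := rfl
lemma xcWE_elem_setv (j : Fin m) (a : A) : xcWE A n m s(.elem a, .setv j) = m - n + 1 := rfl

lemma xcWV_eq (v : XCVtx A m) : xcWV A m v = if v = .start then 0 else 1 := by
  match v with
  | .elem a => rfl
  | .setv j => rfl
  | .start => rfl
  | .dummy => rfl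

lemma sum_xcWV (hA : Fintype.card A = 3 * n) :
    (∑ v : XCVtx A m, xcWV A m v) = 3 * n + m + 1 := by
  classical
  have e : XCVtx A m ≃ (A ⊕ Fin m) ⊕ (Fin 2) :=
    { toFun := fun v => match v with
        | .elem a => Sum.inl (Sum.inl a)
        | .setv j => Sum.inl (Sum.inr j)
        | .start => Sum.inr 0
        | .dummy => Sum.inr 1
      invFun := fun v => match v with
        | Sum.inl (Sum.inl a) => .elem a
        | Sum.inl (Sum.inr j) => .setv j
        | Sum.inr ⟨0, _⟩ => .start
        | Sum.inr ⟨1, _⟩ => .dummy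
      left_inv := by rintro (a | j | _ | _) <;> rfl
      right_inv := by rintro ((a | j) | ⟨(_ | (_ | k)), hk⟩) <;> first | rfl | omega }
  have hcard : Fintype.card (XCVtx A m) = 3 * n + m + 2 := by
    rw [Fintype.card_congr e]
    simp [hA]
  have h1 : (∑ v : XCVtx A m, xcWV A m v)
      = ∑ v : XCVtx A m, (if v = .start then 0 else 1) := by
    refine Finset.sum_congr rfl fun v _ => xcWV_eq v
  rw [h1, ← Finset.sum_erase_add _ _ (Finset.mem_univ XCVtx.start), if_pos rfl]
  have h2 : ∀ v ∈ Finset.univ.erase (XCVtx.start : XCVtx A m),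
      (if v = XCVtx.start then 0 else 1) = 1 := by
    intro v hv
    rw [if_neg (Finset.ne_of_mem_erase hv)]
  rw [Finset.sum_congr rfl h2, Finset.sum_const, smul_eq_mul, mul_one,
    Finset.card_erase_of_mem (Finset.mem_univ _), ← Fintype.card, hcard]
  omega

/-- total weight of a finset of vertices -/
def wt (A : Type*) [DecidableEq A] (m : ℕ) (S : Finset (XCVtx A m)) : ℕ :=
  ∑ v ∈ S, xcWV A m v

lemma card_le_wt {S T : Finset (XCVtx A m)} (hST : S ⊆ T) (hs : XCVtx.start ∉ S) :
    S.card ≤ wt A m T := by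
  have h1 : S.card = ∑ v ∈ S, xcWV A m v := by
    rw [Finset.card_eq_sum_ones]
    refine Finset.sum_congr rfl fun v hv => ?_
    rw [xcWV_eq, if_neg]; rintro rfl; exact hs hv
  rw [h1]
  exact Finset.sum_le_sum_of_subset hST

end Spec

end Deploy
namespace Deploy

section Fwd

variable {A : Type*} [Fintype A] [DecidableEq A] {n m : ℕ} {F : Fin m → Finset A}

lemma escape (hnm : n ≤ m) :
    ∀ {a : A} {t : XCVtx A m} (q : (xcGraph F).Walk (.elem a) t) (s : St (XCVtx A m) ℕ),
    s.add = 0 → s.curr + wt A m s.visited = 3 * n + m + 1 →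
    (scanWalk (xcWE A n m) (xcWV A m) q s).add = 0 →
    XCVtx.dummy ∈ (scanWalk (xcWE A n m) (xcWV A m) q s).visited →
    XCVtx.dummy ∉ s.visited →
    wt A m s.visited ≤ 4 * n := by
  intro a t q s h0 hcurr hfin hdin hdout
  match q with
  | .nil => exact absurd hdin hdout
  | .cons (v := v) h q' =>
    obtain ⟨j, rfl, hj⟩ := adj_elem h
    have h1 : (crossEdge (xcWE A n m) s(.elem a, .setv j) s).add = 0 := by
      have := add_le_scanWalk (xcWE A n m) (xcWV A m) q'
        (visitVtx (xcWV A m) (.setv j) (crossEdge (xcWE A n m) s(.elem a, .setv j) s))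
      have := add_le_visitVtx (xcWV A m) (XCVtx.setv j)
        (crossEdge (xcWE A n m) s(.elem a, .setv j) s)
      have := add_le_crossEdge (xcWE A n m) s((XCVtx.elem a), (XCVtx.setv j)) s
      have hfin' := hfin
      rw [scanWalk] at hfin'
      omega
    have h2 := (crossEdge_of_add _ _ _ h0 h1).1
    rw [xcWE_elem_setv] at h2
    omega

end Fwd

end Deploy
namespace Deploy

section Main

variable {A : Type*} [Fintype A] [DecidableEq A] {n m : ℕ} {F : Fin m → Finset A}

lemma elem_inj : Function.Injective (XCVtx.elem : A → XCVtx A m) :=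
  fun x y hxy => by cases hxy; rfl

lemma setv_inj : Function.Injective (XCVtx.setv : Fin m → XCVtx A m) :=
  fun x y hxy => by cases hxy; rfl

lemma main_ind (hnm : n ≤ m) (hA : Fintype.card A = 3 * n) :
    ∀ {u t : XCVtx A m} (p : (xcGraph F).Walk u t) (s : St (XCVtx A m) ℕ),
    s.add = 0 → s.curr + wt A m s.visited = 3 * n + m + 1 → u ∈ s.visited →
    (∀ a : A, XCVtx.elem a ∈ s.visited → ∃ j, XCVtx.setv j ∈ s.visited ∧ a ∈ F j) →
    (∃ a : A, XCVtx.elem a ∉ s.visited) →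
    (scanWalk (xcWE A n m) (xcWV A m) p s).add = 0 →
    (∀ v, v ∈ (scanWalk (xcWE A n m) (xcWV A m) p s).visited) →
    ∃ Fc : Finset (Fin m), Fc.card ≤ n ∧ ∀ a : A, ∃ j ∈ Fc, a ∈ F j := by
  intro u t p
  induction p with
  | nil =>
    intro s _ _ _ _ hex hfin hcov
    obtain ⟨a, ha⟩ := hex
    exact absurd (hcov (XCVtx.elem a)) ha
  | @cons u v t h q ih =>
    intro s h0 hcurr humem hserve hex hfin hcov
    set s₁ := crossEdge (xcWE A n m) s(u, v) s with hs₁def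
    set s₂ := visitVtx (xcWV A m) v s₁ with hs₂def
    have hscan : scanWalk (xcWE A n m) (xcWV A m) (SimpleGraph.Walk.cons h q) s
        = scanWalk (xcWE A n m) (xcWV A m) q s₂ := rfl
    rw [hscan] at hfin hcov
    have h1add : s₁.add = 0 := by
      have t1 := add_le_scanWalk (xcWE A n m) (xcWV A m) q s₂
      have t2 := add_le_visitVtx (xcWV A m) v s₁
      rw [← hs₂def] at t2
      have t3 := add_le_crossEdge (xcWE A n m) s(u, v) s
      rw [← hs₁def] at t3
      omega
    have h2add : s₂.add = 0 := by
      have t1 := add_le_scanWalk (xcWE A n m) (xcWV A m) q s₂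
      have t2 := add_le_visitVtx (xcWV A m) v s₁
      rw [← hs₂def] at t2
      omega
    have h1add' : (crossEdge (xcWE A n m) s(u, v) s).add = 0 := by rw [← hs₁def]; exact h1add
    obtain ⟨hEle, hs₁⟩ := crossEdge_of_add _ _ _ h0 h1add'
    have hs₂s : s₂ = visitVtx (xcWV A m) v s := by rw [hs₂def, hs₁def, hs₁]
    have h2add' : (visitVtx (xcWV A m) v s).add = 0 := by rw [← hs₂s]; exact h2add
    rcases visitVtx_of_add _ _ _ h0 h2add' with ⟨hvmem, hs₂⟩ | ⟨hvnot, hwle, hs₂⟩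
    · rw [← hs₂s] at hs₂
      rw [hs₂] at hfin hcov
      exact ih s h0 hcurr hvmem hserve hex hfin hcov
    · rw [← hs₂s] at hs₂
      rw [h0] at hs₂
      have hwt : wt A m (insert v s.visited) = xcWV A m v + wt A m s.visited := by
        rw [wt, Finset.sum_insert hvnot]; rfl
      have hcurr₂ : s₂.curr + wt A m s₂.visited = 3 * n + m + 1 := by
        rw [hs₂]
        show (s.curr - xcWV A m v) + wt A m (insert v s.visited) = 3 * n + m + 1
        rw [hwt]; omega
      have hserve₂ : ∀ a : A, XCVtx.elem a ∈ s₂.visited →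
          ∃ j, XCVtx.setv j ∈ s₂.visited ∧ a ∈ F j := by
        intro a ha
        rw [hs₂] at ha ⊢
        simp only [Finset.mem_insert] at ha
        rcases ha with ha | ha
        · obtain ⟨j, rfl, hj⟩ := adj_elem' (ha ▸ h)
          exact ⟨j, Finset.mem_insert_of_mem humem, hj⟩
        · obtain ⟨j, hjm, hj⟩ := hserve a ha
          exact ⟨j, Finset.mem_insert_of_mem hjm, hj⟩
      by_cases hall : ∀ a : A, XCVtx.elem a ∈ s₂.visited
      · -- the last element has just been visited
        obtain ⟨a₀, ha₀⟩ := hex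
        have hv : v = XCVtx.elem a₀ := by
          have := hall a₀
          rw [hs₂, Finset.mem_insert] at this
          rcases this with h' | h'
          · exact h'.symm
          · exact absurd h' ha₀
        subst hv
        obtain ⟨j₀, hu, hj₀⟩ := adj_elem' h
        have hcE : (m - n + 1) ≤ s.curr := by
          have : xcWE A n m s(u, XCVtx.elem a₀) = m - n + 1 := by
            rw [hu]; exact xcWE_setv_elem j₀ a₀
          omega
        have hn1 : 1 ≤ n := by
          have : 0 < Fintype.card A := Fintype.card_pos_iff.2 ⟨a₀⟩
          omega
        have hwtle : wt A m s.visited ≤ 4 * n := by omega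
        set Fc := Finset.univ.filter (fun j => XCVtx.setv j ∈ s.visited) with hFcdef
        have hFcmem : ∀ j, j ∈ Fc ↔ XCVtx.setv j ∈ s.visited := by
          intro j; rw [hFcdef, Finset.mem_filter]; simp
        have hcovF : ∀ a : A, ∃ j ∈ Fc, a ∈ F j := by
          intro a
          by_cases haa : a = a₀
          · exact ⟨j₀, (hFcmem j₀).2 (hu ▸ humem), haa ▸ hj₀⟩
          · have ha : XCVtx.elem a ∈ s.visited := by
              have := hall a
              rw [hs₂, Finset.mem_insert] at this
              rcases this with h' | h'
              · exact absurd (elem_inj h') haa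
              · exact h'
            obtain ⟨j, hjm, hj⟩ := hserve a ha
            exact ⟨j, (hFcmem j).2 hjm, hj⟩
        have hdisj : Disjoint ((Finset.univ.erase a₀).image (XCVtx.elem : A → XCVtx A m))
            (Fc.image XCVtx.setv) := by
          rw [Finset.disjoint_left]
          intro x hx hy
          obtain ⟨a, _, rfl⟩ := Finset.mem_image.1 hx
          obtain ⟨j, _, hj⟩ := Finset.mem_image.1 hy
          exact (fun h => by cases h) hj
        have hdisj2 : Disjoint (Finset.univ.image (XCVtx.elem : A → XCVtx A m))
            (Fc.image XCVtx.setv) := by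
          rw [Finset.disjoint_left]
          intro x hx hy
          obtain ⟨a, _, rfl⟩ := Finset.mem_image.1 hx
          obtain ⟨j, _, hj⟩ := Finset.mem_image.1 hy
          exact (fun h => by cases h) hj
        refine ⟨Fc, ?_, hcovF⟩
        by_cases hd : XCVtx.dummy ∈ s.visited
        · set S := ((Finset.univ.erase a₀).image (XCVtx.elem : A → XCVtx A m))
            ∪ (Fc.image XCVtx.setv) ∪ {XCVtx.dummy} with hSdef
          have hSsub : S ⊆ s.visited := by
            intro x hx
            rw [hSdef, Finset.mem_union, Finset.mem_union] at hx
            rcases hx with (hx | hx) | hx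
            · obtain ⟨a, hamem, rfl⟩ := Finset.mem_image.1 hx
              have := hall a
              rw [hs₂, Finset.mem_insert] at this
              rcases this with h' | h'
              · exact absurd (elem_inj h') (Finset.ne_of_mem_erase hamem)
              · exact h'
            · obtain ⟨j, hjm, rfl⟩ := Finset.mem_image.1 hx
              exact (hFcmem j).1 hjm
            · rw [Finset.mem_singleton] at hx; subst hx; exact hd
          have hSstart : XCVtx.start ∉ S := by
            rw [hSdef]
            simp only [Finset.mem_union, Finset.mem_singleton, Finset.mem_image]
            rintro ((⟨a, -, ha⟩ | ⟨j, -, hj⟩) | hh)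
            · exact (fun h => by cases h) ha
            · exact (fun h => by cases h) hj
            · exact (fun h => by cases h) hh
          have hScard : S.card = (3 * n - 1) + Fc.card + 1 := by
            rw [hSdef, Finset.card_union_of_disjoint, Finset.card_union_of_disjoint hdisj]
            · rw [Finset.card_image_of_injective _ elem_inj,
                Finset.card_image_of_injective _ setv_inj,
                Finset.card_erase_of_mem (Finset.mem_univ _), Finset.card_singleton,
                ← Fintype.card, hA]
            · rw [Finset.disjoint_left]
              intro x hx hy
              rw [Finset.mem_singleton] at hy; subst hy
              rw [Finset.mem_union] at hx
              rcases hx with hx | hx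
              · obtain ⟨a, -, ha⟩ := Finset.mem_image.1 hx; exact (fun h => by cases h) ha
              · obtain ⟨j, -, hj⟩ := Finset.mem_image.1 hx; exact (fun h => by cases h) hj
          have := card_le_wt hSsub hSstart
          omega
        · have hd₂ : XCVtx.dummy ∉ s₂.visited := by
            rw [hs₂, Finset.mem_insert]
            rintro (h' | h')
            · exact (fun h => by cases h) h'
            · exact hd h'
          have hesc := escape hnm q s₂ h2add hcurr₂ hfin (hcov XCVtx.dummy) hd₂
          set S := (Finset.univ.image (XCVtx.elem : A → XCVtx A m))
            ∪ (Fc.image XCVtx.setv) with hSdef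
          have hSsub : S ⊆ s₂.visited := by
            intro x hx
            rw [hSdef, Finset.mem_union] at hx
            rcases hx with hx | hx
            · obtain ⟨a, -, rfl⟩ := Finset.mem_image.1 hx
              exact hall a
            · obtain ⟨j, hjm, rfl⟩ := Finset.mem_image.1 hx
              rw [hs₂]
              exact Finset.mem_insert_of_mem ((hFcmem j).1 hjm)
          have hSstart : XCVtx.start ∉ S := by
            rw [hSdef]
            simp only [Finset.mem_union, Finset.mem_image]
            rintro (⟨a, -, ha⟩ | ⟨j, -, hj⟩)
            · exact (fun h => by cases h) ha
            · exact (fun h => by cases h) hj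
          have hScard : S.card = 3 * n + Fc.card := by
            rw [hSdef, Finset.card_union_of_disjoint hdisj2,
              Finset.card_image_of_injective _ elem_inj,
              Finset.card_image_of_injective _ setv_inj, ← Fintype.card, hA]
          have := card_le_wt hSsub hSstart
          omega
      · push_neg at hall
        refine ih s₂ h2add hcurr₂ ?_ hserve₂ hall hfin hcov
        rw [hs₂]
        exact Finset.mem_insert_self _ _

end Main

end Deploy
namespace Deploy

section Comb

variable {A : Type*} [Fintype A] [DecidableEq A] {n m : ℕ} {F : Fin m → Finset A}

lemma exact_cover_of_small (hA : Fintype.card A = 3 * n) (hF : ∀ j, (F j).card = 3)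
    (Fc : Finset (Fin m)) (hle : Fc.card ≤ n) (hcov : ∀ a : A, ∃ j ∈ Fc, a ∈ F j) :
    Fc.card = n ∧ ∀ i ∈ Fc, ∀ j ∈ Fc, i ≠ j → Disjoint (F i) (F j) := by
  have hB : (Fc.biUnion F) = Finset.univ := by
    refine Finset.eq_univ_of_forall fun a => ?_
    obtain ⟨j, hj, ha⟩ := hcov a
    exact Finset.mem_biUnion.2 ⟨j, hj, ha⟩
  have hBcard : (Fc.biUnion F).card = 3 * n := by rw [hB, ← Fintype.card, hA]
  have hble : (Fc.biUnion F).card ≤ 3 * Fc.card := by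
    calc (Fc.biUnion F).card ≤ ∑ j ∈ Fc, (F j).card := Finset.card_biUnion_le
      _ = 3 * Fc.card := by
          rw [Finset.sum_congr rfl fun j _ => hF j, Finset.sum_const, smul_eq_mul, mul_comm]
  have hcard : Fc.card = n := by omega
  refine ⟨hcard, fun i hi j hj hij => ?_⟩
  by_contra hnd
  obtain ⟨x, hxi, hxj⟩ := Finset.not_disjoint_iff.1 hnd
  have hsub : Fc.biUnion F ⊆ (F i).erase x ∪ (Fc.erase i).biUnion F := by
    intro a ha
    obtain ⟨k, hk, hak⟩ := Finset.mem_biUnion.1 ha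
    rw [Finset.mem_union]
    by_cases hki : k = i
    · subst hki
      by_cases hax : a = x
      · subst hax
        exact Or.inr (Finset.mem_biUnion.2 ⟨j, Finset.mem_erase.2 ⟨hij.symm, hj⟩, hxj⟩)
      · exact Or.inl (Finset.mem_erase.2 ⟨hax, hak⟩)
    · exact Or.inr (Finset.mem_biUnion.2 ⟨k, Finset.mem_erase.2 ⟨hki, hk⟩, hak⟩)
  have h1 : ((F i).erase x).card = 2 := by
    rw [Finset.card_erase_of_mem hxi, hF i]
  have h2 : ((Fc.erase i).biUnion F).card ≤ 3 * (n - 1) := by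
    calc ((Fc.erase i).biUnion F).card ≤ ∑ j ∈ Fc.erase i, (F j).card :=
        Finset.card_biUnion_le
      _ = 3 * (n - 1) := by
          rw [Finset.sum_congr rfl fun j _ => hF j, Finset.sum_const, smul_eq_mul, mul_comm,
            Finset.card_erase_of_mem hi, hcard]
  have h3 := Finset.card_le_card hsub
  have h4 := Finset.card_union_le ((F i).erase x) ((Fc.erase i).biUnion F)
  have hn1 : 1 ≤ n := by
    have : 0 < Fc.card := Finset.card_pos.2 ⟨i, hi⟩
    omega
  omega

end Comb

end Deploy
namespace Deploy

section FwdTop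

variable {A : Type*} [Fintype A] [DecidableEq A] {n m : ℕ} {F : Fin m → Finset A}

lemma forward_dir (hnm : n ≤ m) (hA : Fintype.card A = 3 * n) (hF : ∀ j, (F j).card = 3)
    {t : XCVtx A m} (p : (xcGraph F).Walk .start t) (hcov : IsCovering p)
    (hcnt : agentCount (xcWE A n m) (xcWV A m) p = 3 * n + m + 1) :
    ∃ Fc : Finset (Fin m), Fc.card = n ∧
      (∀ i ∈ Fc, ∀ j ∈ Fc, i ≠ j → Disjoint (F i) (F j)) ∧
      ∀ a : A, ∃ j ∈ Fc, a ∈ F j := by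
  rcases Nat.eq_zero_or_pos n with hn0 | hnpos
  · subst hn0
    haveI : IsEmpty A := Fintype.card_eq_zero_iff.1 (by omega)
    exact ⟨∅, rfl, fun i hi => absurd hi (Finset.notMem_empty i),
      fun a => (IsEmpty.false a).elim⟩
  · have hN := sum_xcWV (n := n) (m := m) (A := A) hA
    have hs0 : visitVtx (xcWV A m) XCVtx.start
        (⟨∅, ∑ v : XCVtx A m, xcWV A m v, 0⟩ : St (XCVtx A m) ℕ)
        = ⟨{XCVtx.start}, ∑ v : XCVtx A m, xcWV A m v, 0⟩ := by
      rw [visitVtx, if_neg (Finset.notMem_empty _)]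
      have : ¬ ((⟨∅, ∑ v : XCVtx A m, xcWV A m v, 0⟩ : St (XCVtx A m) ℕ).curr
          < xcWV A m XCVtx.start) := by
        show ¬ (_ < 0); omega
      rw [if_neg this]
      rfl
    rw [agentCount, hs0, hN] at hcnt
    have hfin : (scanWalk (xcWE A n m) (xcWV A m) p
        (⟨{XCVtx.start}, 3 * n + m + 1, 0⟩ : St (XCVtx A m) ℕ)).add = 0 := by
      omega
    have hwt0 : wt A m ({XCVtx.start} : Finset (XCVtx A m)) = 0 := by
      rw [wt, Finset.sum_singleton]; rfl
    obtain ⟨a₀⟩ : Nonempty A := Fintype.card_pos_iff.1 (by omega)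
    obtain ⟨Fc, hle, hc⟩ := main_ind hnm hA p
      (⟨{XCVtx.start}, 3 * n + m + 1, 0⟩ : St (XCVtx A m) ℕ)
      rfl (by rw [hwt0]) (Finset.mem_singleton_self _)
      (fun a ha => absurd (Finset.mem_singleton.1 ha) (fun h => (fun h => by cases h) h))
      ⟨a₀, fun h => (fun h => by cases h) (Finset.mem_singleton.1 h)⟩
      hfin
      (fun v => support_subset_scanWalk _ _ p _ (Finset.mem_singleton_self _) v (hcov v))
    obtain ⟨hcard, hdisj⟩ := exact_cover_of_small hA hF Fc hle hc
    exact ⟨Fc, hcard, hdisj, hc⟩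

end FwdTop

end Deploy
namespace Deploy

section Bwd

variable {A : Type*} [Fintype A] [DecidableEq A] {n m : ℕ} {F : Fin m → Finset A}

lemma crossEdge_no {wE : Sym2 (XCVtx A m) → ℕ} {e : Sym2 (XCVtx A m)} {s : St (XCVtx A m) ℕ}
    (h : wE e ≤ s.curr) : crossEdge wE e s = s := by
  rw [crossEdge, if_neg (not_lt.2 h)]

lemma visitVtx_old {wV : XCVtx A m → ℕ} {v : XCVtx A m} {s : St (XCVtx A m) ℕ}
    (h : v ∈ s.visited) : visitVtx wV v s = s := by
  rw [visitVtx, if_pos h]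

lemma visitVtx_new {wV : XCVtx A m → ℕ} {v : XCVtx A m} {s : St (XCVtx A m) ℕ}
    (h : v ∉ s.visited) (h2 : wV v ≤ s.curr) :
    visitVtx wV v s = ⟨insert v s.visited, s.curr - wV v, s.add⟩ := by
  rw [visitVtx, if_neg h, if_neg (not_lt.2 h2)]

lemma scanWalk_cons {u v t : XCVtx A m} {wE : Sym2 (XCVtx A m) → ℕ} {wV : XCVtx A m → ℕ}
    (h : (xcGraph F).Adj u v) (p : (xcGraph F).Walk v t) (s : St (XCVtx A m) ℕ) :
    scanWalk wE wV (SimpleGraph.Walk.cons h p) s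
      = scanWalk wE wV p (visitVtx wV v (crossEdge wE s(u, v) s)) := rfl

/-- The covering segment for a set `F j = {a, b, c}`. -/
def coverSeg (j : Fin m) (a b c : A) (ha : a ∈ F j) (hb : b ∈ F j) (hc : c ∈ F j) :
    (xcGraph F).Walk .start .start :=
  .cons (adj_start_setv j) (.cons (adj_setv_elem ha) (.cons (adj_setv_elem ha).symm
    (.cons (adj_setv_elem hb) (.cons (adj_setv_elem hb).symm (.cons (adj_setv_elem hc)
      (.cons (adj_setv_elem hc).symm (.cons (adj_start_setv j).symm .nil)))))))

lemma coverSeg_support (j : Fin m) (a b c : A) (ha : a ∈ F j) (hb : b ∈ F j) (hc : c ∈ F j) :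
    (coverSeg j a b c ha hb hc).support
      = [.start, .setv j, .elem a, .setv j, .elem b, .setv j, .elem c, .setv j, .start] := by
  rfl

lemma scan_coverSeg (j : Fin m) (a b c : A)
    (ha : a ∈ F j) (hb : b ∈ F j) (hc : c ∈ F j)
    (hab : a ≠ b) (hac : a ≠ c) (hbc : b ≠ c)
    (Vis : Finset (XCVtx A m)) (cval : ℕ)
    (hjn : XCVtx.setv j ∉ Vis) (han : XCVtx.elem a ∉ Vis) (hbn : XCVtx.elem b ∉ Vis)
    (hcn : XCVtx.elem c ∉ Vis) (hstart : XCVtx.start ∈ Vis)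
    (hcge : m - n + 5 ≤ cval) :
    scanWalk (xcWE A n m) (xcWV A m) (coverSeg j a b c ha hb hc) ⟨Vis, cval, 0⟩
      = ⟨insert (.elem c) (insert (.elem b) (insert (.elem a) (insert (.setv j) Vis))),
          cval - 4, 0⟩ := by
  rw [coverSeg, scanWalk_cons, crossEdge_no (by rw [xcWE_start_setv]; exact Nat.zero_le _),
    visitVtx_new hjn (by show xcWV A m _ ≤ cval; simp [xcWV]; omega)]
  rw [scanWalk_cons, crossEdge_no (by rw [xcWE_setv_elem]; show m - n + 1 ≤ cval - _; simp [xcWV]; omega),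
    visitVtx_new (by simp [han]) (by show xcWV A m _ ≤ _; simp [xcWV]; omega)]
  rw [scanWalk_cons, crossEdge_no (by rw [xcWE_elem_setv]; show m - n + 1 ≤ _; simp [xcWV]; omega),
    visitVtx_old (by simp)]
  rw [scanWalk_cons, crossEdge_no (by rw [xcWE_setv_elem]; show m - n + 1 ≤ _; simp [xcWV]; omega),
    visitVtx_new (by simp [hbn, (Ne.symm hab)]) (by show xcWV A m _ ≤ _; simp [xcWV]; omega)]
  rw [scanWalk_cons, crossEdge_no (by rw [xcWE_elem_setv]; show m - n + 1 ≤ _; simp [xcWV]; omega),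
    visitVtx_old (by simp)]
  rw [scanWalk_cons, crossEdge_no (by rw [xcWE_setv_elem]; show m - n + 1 ≤ _; simp [xcWV]; omega),
    visitVtx_new (by simp [hcn, (Ne.symm hac), (Ne.symm hbc)]) (by show xcWV A m _ ≤ _; simp [xcWV]; omega)]
  rw [scanWalk_cons, crossEdge_no (by rw [xcWE_elem_setv]; show m - n + 1 ≤ _; simp [xcWV]; omega),
    visitVtx_old (by simp)]
  rw [scanWalk_cons, crossEdge_no (by rw [xcWE_setv_start]; exact Nat.zero_le _),
    visitVtx_old (by simp [hstart])]
  show (⟨_, _, _⟩ : St (XCVtx A m) ℕ) = _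
  simp only [St.mk.injEq, xcWV]
  exact ⟨trivial, by omega, trivial⟩

end Bwd

end Deploy
namespace Deploy

section Phase

variable {A : Type*} [Fintype A] [DecidableEq A] {n m : ℕ} {F : Fin m → Finset A}

lemma coverPhase (hF : ∀ j, (F j).card = 3) :
    ∀ (L : List (Fin m)), L.Nodup →
    (∀ i ∈ L, ∀ j ∈ L, i ≠ j → Disjoint (F i) (F j)) →
    ∀ (Vis : Finset (XCVtx A m)) (cval : ℕ),
    XCVtx.start ∈ Vis →
    (∀ j ∈ L, XCVtx.setv j ∉ Vis) →
    (∀ j ∈ L, ∀ a ∈ F j, XCVtx.elem a ∉ Vis) →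
    m - n + 1 + 4 * L.length ≤ cval →
    ∃ (w : (xcGraph F).Walk .start .start) (Vis' : Finset (XCVtx A m)),
      scanWalk (xcWE A n m) (xcWV A m) w ⟨Vis, cval, 0⟩ = ⟨Vis', cval - 4 * L.length, 0⟩ ∧
      (∀ x ∈ Vis', x ∈ Vis ∨ (∃ j ∈ L, x = XCVtx.setv j) ∨
        (∃ j ∈ L, ∃ a ∈ F j, x = XCVtx.elem a)) ∧
      (∀ j ∈ L, XCVtx.setv j ∈ w.support) ∧
      (∀ j ∈ L, ∀ a ∈ F j, XCVtx.elem a ∈ w.support) := by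
  intro L
  induction L with
  | nil =>
    intro _ _ Vis cval _ _ _ _
    refine ⟨.nil, Vis, ?_, fun x hx => Or.inl hx, by simp, by simp⟩
    rw [scanWalk]
    simp
  | cons j L' ihL =>
    intro hnd hdisj Vis cval hstart hsetv helem hge
    obtain ⟨a, b, c, hab, hac, hbc, habc⟩ := Finset.card_eq_three.1 (hF j)
    have ha : a ∈ F j := by rw [habc]; simp
    have hb : b ∈ F j := by rw [habc]; simp
    have hc : c ∈ F j := by rw [habc]; simp
    have hjL : j ∈ j :: L' := List.mem_cons_self
    have hseg := scan_coverSeg (n := n) (F := F) j a b c ha hb hc hab hac hbc Vis cval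
      (hsetv j hjL) (helem j hjL a ha) (helem j hjL b hb) (helem j hjL c hc) hstart
      (by simp at hge; omega)
    set Vis₁ := insert (XCVtx.elem c) (insert (XCVtx.elem b) (insert (XCVtx.elem a)
      (insert (XCVtx.setv j) Vis))) with hVis₁
    have hjne : ∀ j' ∈ L', j' ≠ j := by
      intro j' hj' hj'j
      exact (List.nodup_cons.1 hnd).1 (hj'j ▸ hj')
    have hsub₁ : ∀ x ∈ Vis₁, x ∈ Vis ∨ x = XCVtx.setv j ∨ ∃ d ∈ F j, x = XCVtx.elem d := by
      intro x hx
      rw [hVis₁] at hx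
      simp only [Finset.mem_insert] at hx
      rcases hx with rfl | rfl | rfl | rfl | hx
      · exact Or.inr (Or.inr ⟨c, hc, rfl⟩)
      · exact Or.inr (Or.inr ⟨b, hb, rfl⟩)
      · exact Or.inr (Or.inr ⟨a, ha, rfl⟩)
      · exact Or.inr (Or.inl rfl)
      · exact Or.inl hx
    obtain ⟨w', Vis', hscan', hsub', hsup1', hsup2'⟩ := ihL (List.nodup_cons.1 hnd).2
      (fun i hi j' hj' hij => hdisj i (List.mem_cons_of_mem _ hi) j'
        (List.mem_cons_of_mem _ hj') hij)
      Vis₁ (cval - 4)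
      (by rw [hVis₁]; simp [hstart])
      (by
        intro j' hj'
        rw [hVis₁]
        simp only [Finset.mem_insert]
        push_neg
        exact ⟨(fun h => by cases h), (fun h => by cases h), (fun h => by cases h),
          fun h => hjne j' hj' (setv_inj h),
          hsetv j' (List.mem_cons_of_mem _ hj')⟩)
      (by
        intro j' hj' d hd
        have hdn : d ∉ F j := by
          intro hdF
          exact Finset.disjoint_left.1
            (hdisj j' (List.mem_cons_of_mem _ hj') j hjL (hjne j' hj')) hd hdF
        rw [hVis₁]
        simp only [Finset.mem_insert]
        push_neg
        refine ⟨fun h => hdn ((elem_inj h) ▸ hc), fun h => hdn ((elem_inj h) ▸ hb),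
          fun h => hdn ((elem_inj h) ▸ ha), (fun h => by cases h),
          helem j' (List.mem_cons_of_mem _ hj') d hd⟩)
      (by simp at hge ⊢; omega)
    refine ⟨(coverSeg j a b c ha hb hc).append w', Vis', ?_, ?_, ?_, ?_⟩
    · rw [scanWalk_append, hseg, hscan']
      have : cval - 4 - 4 * L'.length = cval - 4 * (j :: L').length := by
        simp; omega
      rw [this]
    · intro x hx
      rcases hsub' x hx with hx1 | ⟨j', hj', rfl⟩ | ⟨j', hj', d, hd, rfl⟩
      · rcases hsub₁ x hx1 with h | h | ⟨d, hd, rfl⟩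
        · exact Or.inl h
        · exact Or.inr (Or.inl ⟨j, hjL, h⟩)
        · exact Or.inr (Or.inr ⟨j, hjL, d, hd, rfl⟩)
      · exact Or.inr (Or.inl ⟨j', List.mem_cons_of_mem _ hj', rfl⟩)
      · exact Or.inr (Or.inr ⟨j', List.mem_cons_of_mem _ hj', d, hd, rfl⟩)
    · intro j' hj'
      rw [SimpleGraph.Walk.mem_support_append_iff]
      rcases List.mem_cons.1 hj' with rfl | hj'
      · exact Or.inl (by rw [coverSeg_support]; simp)
      · exact Or.inr (hsup1' j' hj')
    · intro j' hj' d hd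
      rw [SimpleGraph.Walk.mem_support_append_iff]
      rcases List.mem_cons.1 hj' with rfl | hj'
      · refine Or.inl ?_
        rw [coverSeg_support]
        rw [habc] at hd
        simp only [Finset.mem_insert, Finset.mem_singleton] at hd
        rcases hd with rfl | rfl | rfl <;> simp
      · exact Or.inr (hsup2' j' hj' d hd)

lemma loopPhase :
    ∀ (L : List (Fin m)) (Vis : Finset (XCVtx A m)) (cval : ℕ),
    XCVtx.start ∈ Vis →
    (∀ j ∈ L, XCVtx.setv j ∉ Vis) →
    L.Nodup →
    L.length ≤ cval →
    ∃ (w : (xcGraph F).Walk .start .start) (Vis' : Finset (XCVtx A m)),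
      scanWalk (xcWE A n m) (xcWV A m) w ⟨Vis, cval, 0⟩ = ⟨Vis', cval - L.length, 0⟩ ∧
      (∀ x ∈ Vis', x ∈ Vis ∨ ∃ j ∈ L, x = XCVtx.setv j) ∧
      (∀ j ∈ L, XCVtx.setv j ∈ w.support) := by
  intro L
  induction L with
  | nil =>
    intro Vis cval _ _ _ _
    refine ⟨.nil, Vis, ?_, fun x hx => Or.inl hx, by simp⟩
    rw [scanWalk]
    simp
  | cons j L' ihL =>
    intro Vis cval hstart hsetv hnd hlen
    have hjL : j ∈ j :: L' := List.mem_cons_self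
    have hstep : scanWalk (xcWE A n m) (xcWV A m)
        ((SimpleGraph.Walk.cons (adj_start_setv j)
          (SimpleGraph.Walk.cons (adj_start_setv j).symm SimpleGraph.Walk.nil)) :
          (xcGraph F).Walk .start .start) ⟨Vis, cval, 0⟩
        = ⟨insert (XCVtx.setv j) Vis, cval - 1, 0⟩ := by
      rw [scanWalk_cons, crossEdge_no (by rw [xcWE_start_setv]; exact Nat.zero_le _),
        visitVtx_new (hsetv j hjL) (by show xcWV A m _ ≤ cval; simp [xcWV] at hlen ⊢; omega)]
      rw [scanWalk_cons,
        crossEdge_no (by rw [xcWE_setv_start]; exact Nat.zero_le _),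
        visitVtx_old (by simp [hstart])]
      rw [scanWalk]
      simp [xcWV]
    obtain ⟨w', Vis', hscan', hsub', hsup'⟩ := ihL (insert (XCVtx.setv j) Vis) (cval - 1)
      (Finset.mem_insert_of_mem hstart)
      (by
        intro j' hj'
        simp only [Finset.mem_insert]
        push_neg
        refine ⟨fun h => (List.nodup_cons.1 hnd).1 ((setv_inj h) ▸ hj'), 
          hsetv j' (List.mem_cons_of_mem _ hj')⟩)
      (List.nodup_cons.1 hnd).2
      (by simp at hlen ⊢; omega)
    refine ⟨SimpleGraph.Walk.append
      (.cons (adj_start_setv j) (.cons (adj_start_setv j).symm .nil)) w', Vis', ?_, ?_, ?_⟩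
    · rw [scanWalk_append, hstep, hscan']
      have : cval - 1 - L'.length = cval - (j :: L').length := by simp; omega
      rw [this]
    · intro x hx
      rcases hsub' x hx with hx1 | ⟨j', hj', rfl⟩
      · rcases Finset.mem_insert.1 hx1 with rfl | h
        · exact Or.inr ⟨j, hjL, rfl⟩
        · exact Or.inl h
      · exact Or.inr ⟨j', List.mem_cons_of_mem _ hj', rfl⟩
    · intro j' hj'
      rw [SimpleGraph.Walk.mem_support_append_iff]
      rcases List.mem_cons.1 hj' with rfl | hj'
      · exact Or.inl (by simp)
      · exact Or.inr (hsup' j' hj')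

end Phase

end Deploy
namespace Deploy

section BwdTop

variable {A : Type*} [Fintype A] [DecidableEq A] {n m : ℕ} {F : Fin m → Finset A}

lemma start_init : visitVtx (xcWV A m) XCVtx.start
    (⟨∅, ∑ v : XCVtx A m, xcWV A m v, 0⟩ : St (XCVtx A m) ℕ)
    = ⟨{XCVtx.start}, ∑ v : XCVtx A m, xcWV A m v, 0⟩ := by
  rw [visitVtx, if_neg (Finset.notMem_empty _)]
  have : ¬ ((⟨∅, ∑ v : XCVtx A m, xcWV A m v, 0⟩ : St (XCVtx A m) ℕ).curr
      < xcWV A m XCVtx.start) := by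
    show ¬ (_ < 0); omega
  rw [if_neg this]
  rfl

lemma backward_dir (hnm : n ≤ m) (hA : Fintype.card A = 3 * n) (hF : ∀ j, (F j).card = 3)
    (Fc : Finset (Fin m)) (hcard : Fc.card = n)
    (hdisj : ∀ i ∈ Fc, ∀ j ∈ Fc, i ≠ j → Disjoint (F i) (F j))
    (hcov : ∀ a : A, ∃ j ∈ Fc, a ∈ F j) :
    ∃ (t : XCVtx A m) (p : (xcGraph F).Walk .start t),
      IsCovering p ∧ agentCount (xcWE A n m) (xcWV A m) p = 3 * n + m + 1 := by
  have hLlen : Fc.toList.length = n := by rw [Finset.length_toList, hcard]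
  obtain ⟨w₁, Vis₁, hscan₁, hsub₁, hsupS₁, hsupE₁⟩ :=
    coverPhase (n := n) hF Fc.toList Fc.nodup_toList
      (fun i hi j hj hij => hdisj i (Finset.mem_toList.1 hi) j (Finset.mem_toList.1 hj) hij)
      {XCVtx.start} (3 * n + m + 1)
      (Finset.mem_singleton_self _)
      (by intro j _; simp)
      (by intro j _ a _; simp)
      (by rw [hLlen]; omega)
  have hscan₁' : scanWalk (xcWE A n m) (xcWV A m) w₁ ⟨{XCVtx.start}, 3 * n + m + 1, 0⟩
      = ⟨Vis₁, m - n + 1, 0⟩ := by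
    rw [hscan₁, hLlen]
    have : 3 * n + m + 1 - 4 * n = m - n + 1 := by omega
    rw [this]
  have hstart₁ : XCVtx.start ∈ Vis₁ := by
    have h := visited_subset_scanWalk (xcWE A n m) (xcWV A m) w₁
      (⟨{XCVtx.start}, 3 * n + m + 1, 0⟩ : St (XCVtx A m) ℕ)
    rw [hscan₁'] at h
    exact h (Finset.mem_singleton_self _)
  have hL₂len : (Finset.univ \ Fc).toList.length = m - n := by
    rw [Finset.length_toList, Finset.card_sdiff_of_subset (Finset.subset_univ _),
      Finset.card_univ, Fintype.card_fin, hcard]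
  obtain ⟨w₂, Vis₂, hscan₂, hsub₂, hsupS₂⟩ :=
    loopPhase (n := n) (F := F) (Finset.univ \ Fc).toList Vis₁ (m - n + 1)
      hstart₁
      (by
        intro j hj hjVis
        have hjFc : j ∉ Fc := (Finset.mem_sdiff.1 (Finset.mem_toList.1 hj)).2
        rcases hsub₁ _ hjVis with h | ⟨j', hj', hjj'⟩ | ⟨j', _, a, _, hja⟩
        · exact (fun h => by cases h) (Finset.mem_singleton.1 h)
        · exact hjFc ((setv_inj hjj') ▸ Finset.mem_toList.1 hj')
        · exact (fun h => by cases h) hja)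
      (Finset.univ \ Fc).nodup_toList
      (by rw [hL₂len]; omega)
  have hscan₂' : scanWalk (xcWE A n m) (xcWV A m) w₂ ⟨Vis₁, m - n + 1, 0⟩
      = ⟨Vis₂, 1, 0⟩ := by
    rw [hscan₂, hL₂len]
    have : m - n + 1 - (m - n) = 1 := by omega
    rw [this]
  have hdummy₂ : XCVtx.dummy ∉ Vis₂ := by
    intro hd
    rcases hsub₂ _ hd with hd1 | ⟨j, _, hdj⟩
    · rcases hsub₁ _ hd1 with h | ⟨j', _, hjj'⟩ | ⟨j', _, a, _, hja⟩
      · exact (fun h => by cases h) (Finset.mem_singleton.1 h)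
      · exact (fun h => by cases h) hjj'
      · exact (fun h => by cases h) hja
    · exact (fun h => by cases h) hdj
  set w₃ : (xcGraph F).Walk .start .dummy :=
    SimpleGraph.Walk.cons adj_start_dummy SimpleGraph.Walk.nil with hw₃
  have hscan₃ : scanWalk (xcWE A n m) (xcWV A m) w₃ ⟨Vis₂, 1, 0⟩
      = ⟨insert XCVtx.dummy Vis₂, 0, 0⟩ := by
    rw [hw₃, scanWalk_cons, crossEdge_no (by rw [xcWE_start_dummy]; exact Nat.zero_le _),
      visitVtx_new hdummy₂ (by show xcWV A m _ ≤ 1; simp [xcWV])]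
    rw [scanWalk]
    simp [xcWV]
  refine ⟨.dummy, (w₁.append w₂).append w₃, ?_, ?_⟩
  · intro v
    rw [SimpleGraph.Walk.mem_support_append_iff, SimpleGraph.Walk.mem_support_append_iff]
    match v with
    | .elem a =>
      obtain ⟨j, hj, haj⟩ := hcov a
      exact Or.inl (Or.inl (hsupE₁ j (Finset.mem_toList.2 hj) a haj))
    | .setv j =>
      by_cases hj : j ∈ Fc
      · exact Or.inl (Or.inl (hsupS₁ j (Finset.mem_toList.2 hj)))
      · exact Or.inl (Or.inr (hsupS₂ j (Finset.mem_toList.2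
          (Finset.mem_sdiff.2 ⟨Finset.mem_univ _, hj⟩))))
    | .start => exact Or.inl (Or.inl w₁.start_mem_support)
    | .dummy => exact Or.inr (by rw [hw₃]; simp)
  · rw [agentCount, start_init, sum_xcWV hA, scanWalk_append, scanWalk_append,
      hscan₁', hscan₂', hscan₃]
    rfl

end BwdTop

end Deploy

/-- with `|X| = 3n` and `F` a family of `m ≥ n` three-element
subsets of `X`, the graph `G(X, F)` admits a covering walk from `v_s` with
agent count exactly `N = 3n + m + 1` if and only if `F` contains an exact
3-cover of `X`. -/
theorem xc_reduction_no_return {A : Type*} [Fintype A] [DecidableEq A]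
    (n m : ℕ) (hnm : n ≤ m) (hA : Fintype.card A = 3 * n)
    (F : Fin m → Finset A) (hF : ∀ j, (F j).card = 3) :
    (∃ (t : Deploy.XCVtx A m) (p : (Deploy.xcGraph F).Walk .start t),
      Deploy.IsCovering p ∧
      Deploy.agentCount (Deploy.xcWE A n m) (Deploy.xcWV A m) p = 3 * n + m + 1) ↔
    (∃ Fc : Finset (Fin m), Fc.card = n ∧
      (∀ i ∈ Fc, ∀ j ∈ Fc, i ≠ j → Disjoint (F i) (F j)) ∧
      ∀ a : A, ∃ j ∈ Fc, a ∈ F j) := by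
  constructor
  · rintro ⟨t, p, hc, hcnt⟩
    exact Deploy.forward_dir hnm hA hF p hc hcnt
  · rintro ⟨Fc, hcard, hdisj, hcov⟩
    exact Deploy.backward_dir hnm hA hF Fc hcard hdisj hcov
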